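/- Let K be a field, f_n ∈ K[x_n] with f_n coprime to x_n and to each f_i (i ≠ ℓ, n), and let u ∈ ℤⁿ with u_ℓ = −1, u_i ≥ 0 for i ≠ ℓ, ℓ < n. Define f_ℓ' ∈ K[x_n] as the unique polynomial of degree < deg f_n with f_ℓ' ≡ (x_n^{u_n} · ∏_{i≠ℓ,n} f_i^{u_i})^{−1} · f_ℓ (mod f_n). Then the ideal generated by {f_n, x_{n−1}−f_{n−1}, …, (∏_{i≠ℓ} x_i^{u_i})·x_ℓ − f_ℓ, …, x₁−f₁} in K[x₁,…,x_n] modulo (f_n, x_i − f_i for i ≠ ℓ, n) coincides with the ideal generated by {f_n, x_{n−1}−f_{n−1}, …, x_ℓ − f_ℓ', …, x₁−f₁}. -/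
import Mathlib
open MvPolynomial

lemma prod_erase_castSucc {M : Type*} [CommMonoid M] {n : ℕ} (ℓ : Fin n) (g : Fin (n+1) → M) :
    ∏ i ∈ Finset.univ.erase ℓ.castSucc, g i
      = g (Fin.last n) * ∏ j ∈ Finset.univ.erase ℓ, g j.castSucc := by
  have hset : (Finset.univ.erase ℓ.castSucc : Finset (Fin (n+1)))
      = insert (Fin.last n) ((Finset.univ.erase ℓ).image Fin.castSucc) := by
    ext i
    rcases Fin.eq_castSucc_or_eq_last i with ⟨j, rfl⟩ | rfl
    · simp [Fin.castSucc_inj, (Fin.castSucc_lt_last j).ne]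
    · simp [(Fin.castSucc_lt_last ℓ).ne']
  rw [hset, Finset.prod_insert (by simp only [Finset.mem_image]; rintro ⟨a, -, h⟩; exact (Fin.castSucc_lt_last a).ne h),
    Finset.prod_image (fun a _ b _ h => Fin.castSucc_injective _ h)]

set_option maxHeartbeats 1000000 in
set_option synthInstance.maxHeartbeats 400000 in
/-- Correctness of the slim unimodular Gröbner basis transformation: if `f_n` is coprime
to `x_n` and to each `f_i` (`i ≠ ℓ`), `u_ℓ = -1`, `u_i ≥ 0` otherwise, and
`f_ℓ' ∈ K[x_n]` is the polynomial of degree `< deg f_n` with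
`(x_n^{u_n} ∏_{i≠ℓ,n} f_i^{u_i}) · f_ℓ' ≡ f_ℓ (mod f_n)`, then the ideal of
`K[x₁,…,x_n]` generated by
`{f_n, x_i - f_i (i ≠ ℓ), (∏_{i≠ℓ} x_i^{u_i})·x_ℓ - f_ℓ}` coincides with the ideal
generated by `{f_n, x_i - f_i (i ≠ ℓ), x_ℓ - f_ℓ'}`.
Here there are `n+1` variables indexed by `Fin (n+1)`, `x_n` being the last one, `ℓ` one
of the first `n` indices, and the nonnegative exponents `u_i` (`i ≠ ℓ`) are given as
naturals. -/
theorem stmt11 (K : Type*) [Field K] (n : ℕ)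
    (fn : Polynomial K) (f : Fin n → Polynomial K) (ℓ : Fin n)
    (hfn : fn ≠ 0)
    (hx : IsCoprime fn Polynomial.X)
    (hf : ∀ i : Fin n, i ≠ ℓ → IsCoprime fn (f i))
    (u : Fin (n + 1) → ℕ)
    (fℓ' : Polynomial K) (hdeg : fℓ'.degree < fn.degree)
    (hcong : fn ∣
      (Polynomial.X ^ u (Fin.last n) *
          ∏ i ∈ Finset.univ.erase ℓ, f i ^ u i.castSucc) * fℓ' - f ℓ) :
    Ideal.span
        (({Polynomial.aeval (X (Fin.last n) : MvPolynomial (Fin (n + 1)) K) fn} :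
            Set (MvPolynomial (Fin (n + 1)) K)) ∪
          (Set.range fun i : {i : Fin n // i ≠ ℓ} =>
            X (i.val.castSucc) -
              Polynomial.aeval (X (Fin.last n) : MvPolynomial (Fin (n + 1)) K) (f i.val)) ∪
          {(∏ i ∈ Finset.univ.erase ℓ.castSucc, (X i : MvPolynomial (Fin (n + 1)) K) ^ u i) *
              X ℓ.castSucc -
            Polynomial.aeval (X (Fin.last n) : MvPolynomial (Fin (n + 1)) K) (f ℓ)})
      = Ideal.span
        (({Polynomial.aeval (X (Fin.last n) : MvPolynomial (Fin (n + 1)) K) fn} :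
            Set (MvPolynomial (Fin (n + 1)) K)) ∪
          (Set.range fun i : {i : Fin n // i ≠ ℓ} =>
            X (i.val.castSucc) -
              Polynomial.aeval (X (Fin.last n) : MvPolynomial (Fin (n + 1)) K) (f i.val)) ∪
          {X ℓ.castSucc -
            Polynomial.aeval (X (Fin.last n) : MvPolynomial (Fin (n + 1)) K) fℓ'}) := by
  classical
  set A : Polynomial K →ₐ[K] MvPolynomial (Fin (n + 1)) K :=
    Polynomial.aeval (X (Fin.last n)) with hAdef
  set P : MvPolynomial (Fin (n + 1)) K :=
    ∏ i ∈ Finset.univ.erase ℓ.castSucc, (X i : MvPolynomial (Fin (n + 1)) K) ^ u i with hPdef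
  set g : Polynomial K :=
    Polynomial.X ^ u (Fin.last n) * ∏ i ∈ Finset.univ.erase ℓ, f i ^ u i.castSucc with hgdef
  -- facts about any ideal containing the common generators
  have keyPQ : ∀ I : Ideal (MvPolynomial (Fin (n + 1)) K),
      (∀ j : Fin n, j ≠ ℓ → X j.castSucc - A (f j) ∈ I) →
      Ideal.Quotient.mk I P = Ideal.Quotient.mk I (A g) := by
    intro I hI
    have hA_g : A g = (X (Fin.last n) : MvPolynomial (Fin (n + 1)) K) ^ u (Fin.last n) *
        ∏ j ∈ Finset.univ.erase ℓ, (A (f j)) ^ u j.castSucc := by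
      rw [hAdef, hgdef]
      simp only [map_mul, map_pow, map_prod, Polynomial.aeval_X]
    rw [hA_g, hPdef, prod_erase_castSucc ℓ (fun i => (X i : MvPolynomial (Fin (n + 1)) K) ^ u i)]
    simp only [map_mul, map_pow, map_prod]
    congr 1
    refine Finset.prod_congr rfl fun j hj => ?_
    have : Ideal.Quotient.mk I (X j.castSucc : MvPolynomial (Fin (n + 1)) K)
        = Ideal.Quotient.mk I (A (f j)) :=
      Ideal.Quotient.eq.mpr (hI j (Finset.mem_erase.mp hj).1)
    rw [this]
  have hQF : ∀ I : Ideal (MvPolynomial (Fin (n + 1)) K), A fn ∈ I →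
      Ideal.Quotient.mk I (A g * A fℓ') = Ideal.Quotient.mk I (A (f ℓ)) := by
    intro I hI
    rw [Ideal.Quotient.eq, ← map_mul, ← map_sub]
    obtain ⟨c, hc⟩ := hcong
    rw [hc, map_mul]
    exact I.mul_mem_right _ hI
  apply le_antisymm <;> rw [Ideal.span_le] <;> rintro p ((hp | hp) | hp)
  · exact Ideal.subset_span (Or.inl (Or.inl hp))
  · exact Ideal.subset_span (Or.inl (Or.inr hp))
  · -- P * Xℓ - A fℓ ∈ RHS ideal
    simp only [Set.mem_singleton_iff] at hp
    subst hp
    set I := Ideal.span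
        (({A fn} : Set (MvPolynomial (Fin (n + 1)) K)) ∪
          (Set.range fun i : {i : Fin n // i ≠ ℓ} => X (i.val.castSucc) - A (f i.val)) ∪
          {X ℓ.castSucc - A fℓ'}) with hIdef
    have hfnI : A fn ∈ I := Ideal.subset_span (Or.inl (Or.inl rfl))
    have hgen : ∀ j : Fin n, j ≠ ℓ → X j.castSucc - A (f j) ∈ I := fun j hj =>
      Ideal.subset_span (Or.inl (Or.inr ⟨⟨j, hj⟩, rfl⟩))
    have hXl : Ideal.Quotient.mk I (X ℓ.castSucc : MvPolynomial (Fin (n + 1)) K)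
        = Ideal.Quotient.mk I (A fℓ') :=
      Ideal.Quotient.eq.mpr (Ideal.subset_span (Or.inr rfl))
    refine (Ideal.Quotient.eq (I := I)).mp ?_
    rw [map_mul, hXl, keyPQ I hgen, ← map_mul, hQF I hfnI]
  · exact Ideal.subset_span (Or.inl (Or.inl hp))
  · exact Ideal.subset_span (Or.inl (Or.inr hp))
  · -- Xℓ - A fℓ' ∈ LHS ideal
    simp only [Set.mem_singleton_iff] at hp
    subst hp
    set I := Ideal.span
        (({A fn} : Set (MvPolynomial (Fin (n + 1)) K)) ∪
          (Set.range fun i : {i : Fin n // i ≠ ℓ} => X (i.val.castSucc) - A (f i.val)) ∪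
          {P * X ℓ.castSucc - A (f ℓ)}) with hIdef
    have hfnI : A fn ∈ I := Ideal.subset_span (Or.inl (Or.inl rfl))
    have hgen : ∀ j : Fin n, j ≠ ℓ → X j.castSucc - A (f j) ∈ I := fun j hj =>
      Ideal.subset_span (Or.inl (Or.inr ⟨⟨j, hj⟩, rfl⟩))
    have hPXl : Ideal.Quotient.mk I (P * X ℓ.castSucc) = Ideal.Quotient.mk I (A (f ℓ)) :=
      Ideal.Quotient.eq.mpr (Ideal.subset_span (Or.inr rfl))
    -- coprimality gives an inverse of A g mod I
    have hcop : IsCoprime fn g := by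
      refine (hx.pow_right).mul_right (IsCoprime.prod_right fun i hi => ?_)
      exact (hf i (Finset.mem_erase.mp hi).1).pow_right
    obtain ⟨a, b, hab⟩ := hcop
    have hab' : A a * A fn + A b * A g = 1 := by
      rw [← map_mul, ← map_mul, ← map_add, hab, map_one]
    have hfn0 : Ideal.Quotient.mk I (A fn) = 0 := Ideal.Quotient.eq_zero_iff_mem.mpr hfnI
    have hunit : Ideal.Quotient.mk I (A b) * Ideal.Quotient.mk I (A g) = 1 := by
      have := congrArg (Ideal.Quotient.mk I) hab'
      rw [map_add, map_mul, map_mul, hfn0, mul_zero, zero_add, map_one] at this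
      exact this
    refine (Ideal.Quotient.eq (I := I)).mp ?_
    have hPQ := keyPQ I hgen
    calc Ideal.Quotient.mk I (X ℓ.castSucc : MvPolynomial (Fin (n + 1)) K)
        = (Ideal.Quotient.mk I (A b) * Ideal.Quotient.mk I (A g)) *
            Ideal.Quotient.mk I (X ℓ.castSucc) := by rw [hunit, one_mul]
      _ = Ideal.Quotient.mk I (A b) *
            (Ideal.Quotient.mk I P * Ideal.Quotient.mk I (X ℓ.castSucc)) := by
            rw [← hPQ, mul_assoc]
      _ = Ideal.Quotient.mk I (A b) * Ideal.Quotient.mk I (A (f ℓ)) := by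
            rw [← map_mul, hPXl]
      _ = Ideal.Quotient.mk I (A b) * Ideal.Quotient.mk I (A g * A fℓ') := by
            rw [hQF I hfnI]
      _ = (Ideal.Quotient.mk I (A b) * Ideal.Quotient.mk I (A g)) *
            Ideal.Quotient.mk I (A fℓ') := by rw [map_mul, mul_assoc]
      _ = Ideal.Quotient.mk I (A fℓ') := by rw [hunit, one_mul]
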